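/- arXiv:2505.10716 — 2 statements merged into one kernel-verified Lean document; each statement's English description precedes it below -/
import Mathlib

section
/- Let |G⟩ = U|φ,φ⟩ with |φ⟩ = (|0⟩+|1⟩)/√2 and U = Π₀ ⊗ I + Π₁ ⊗ Ū, Ū = e^{-iψ} diag(e^{iθ}, e^{-iθ}). Then the entanglement distance per qubit of |G⟩ equals 1 - cos²θ = sin²θ. -/
open Complex Matrix BigOperators Finset

noncomputable section

/-- Pauli X. -/
def σx : Matrix (Fin 2) (Fin 2) ℂ := !![0, 1; 1, 0]
/-- Pauli Y. -/
def σy : Matrix (Fin 2) (Fin 2) ℂ := !![0, -I; I, 0]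
/-- Pauli Z. -/
def σz : Matrix (Fin 2) (Fin 2) ℂ := !![1, 0; 0, -1]
/-- Projector on |0⟩. -/
def P0 : Matrix (Fin 2) (Fin 2) ℂ := !![1, 0; 0, 0]
/-- Projector on |1⟩. -/
def P1 : Matrix (Fin 2) (Fin 2) ℂ := !![0, 0; 0, 1]
/-- Ū = e^{-iψ} diag(e^{iθ}, e^{-iθ}). -/
def Ubar (ψ θ : ℝ) : Matrix (Fin 2) (Fin 2) ℂ :=
  Complex.exp (-I * ψ) • !![Complex.exp (I * θ), 0; 0, Complex.exp (-I * θ)]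
/-- The single-qubit state |φ⟩ = (|0⟩+|1⟩)/√2. -/
def phi1 : Fin 2 → ℂ := fun _ => 1 / Real.sqrt 2
/-- The product state |φ⟩^{⊗M}. -/
def prodPhi (M : ℕ) : (Fin M → Fin 2) → ℂ := fun _ => (1 / Real.sqrt 2) ^ M

/-- A single-qubit operator acting on qubit `i` of an `M`-qubit register. -/
def onSite {M : ℕ} (i : Fin M) (A : Matrix (Fin 2) (Fin 2) ℂ) :
    Matrix (Fin M → Fin 2) (Fin M → Fin 2) ℂ :=
  Matrix.of fun x y => A (x i) (y i) * ∏ j ∈ Finset.univ.erase i, (if x j = y j then (1:ℂ) else 0)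

/-- `A` on qubit `a` tensored with `B` on qubit `b`, identity elsewhere. -/
def twoSite {M : ℕ} (a b : Fin M) (A B : Matrix (Fin 2) (Fin 2) ℂ) :
    Matrix (Fin M → Fin 2) (Fin M → Fin 2) ℂ :=
  Matrix.of fun x y => A (x a) (y a) * B (x b) (y b) *
    ∏ j ∈ (Finset.univ.erase a).erase b, (if x j = y j then (1:ℂ) else 0)

/-- The controlled-Ū gate `U_{ab} = Π₀^{(a)} ⊗ I^{(b)} + Π₁^{(a)} ⊗ Ū^{(b)}`. -/
def ctrlU {M : ℕ} (a b : Fin M) (ψ θ : ℝ) : Matrix (Fin M → Fin 2) (Fin M → Fin 2) ℂ :=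
  twoSite a b P0 1 + twoSite a b P1 (Ubar ψ θ)

/-- Expectation value ⟨v|A|v⟩. -/
def expec {n : Type*} [Fintype n] (v : n → ℂ) (A : Matrix n n ℂ) : ℂ :=
  ∑ x, ∑ y, (starRingEnd ℂ) (v x) * A x y * v y

/-- ‖⟨v|σ^{(i)}|v⟩‖², the squared Euclidean norm of the vector of the three
Pauli expectation values on qubit `i`. -/
def pauliNormSq {M : ℕ} (v : (Fin M → Fin 2) → ℂ) (i : Fin M) : ℝ :=
  (expec v (onSite i σx)).re ^ 2 + (expec v (onSite i σy)).re ^ 2 +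
    (expec v (onSite i σz)).re ^ 2

/-- The entanglement distance per qubit. -/
def ED {M : ℕ} (v : (Fin M → Fin 2) → ℂ) : ℝ :=
  1 - (1 / M) * ∑ i, pauliNormSq v i


lemma fin2cases (i : Fin 2) : i = 0 ∨ i = 1 := by omega

lemma sum4 {α} [AddCommMonoid α] (f : (Fin 2 → Fin 2) → α) :
    ∑ x, f x = f ![0,0] + f ![0,1] + f ![1,0] + f ![1,1] := by
  have h : (univ : Finset (Fin 2 → Fin 2)) = {![0,0],![0,1],![1,0],![1,1]} := by decide
  rw [h, Finset.sum_insert (by decide), Finset.sum_insert (by decide),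
    Finset.sum_insert (by decide), Finset.sum_singleton, add_assoc, add_assoc]

theorem stmt12 (ψ θ : ℝ) :
    let G := (ctrlU (0 : Fin 2) 1 ψ θ).mulVec (prodPhi 2)
    ED G = 1 - Real.cos θ ^ 2 ∧ ED G = Real.sin θ ^ 2 := by
  intro G
  have he0 : (univ.erase (0 : Fin 2)) = {1} := by decide
  have he1 : (univ.erase (1 : Fin 2)) = {0} := by decide
  have he01 : ((univ.erase (0 : Fin 2)).erase 1) = ∅ := by decide
  have hs : ((Real.sqrt 2 : ℝ) : ℂ)^2 = 2 := by
    norm_cast; rw [Real.sq_sqrt] <;> norm_num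
  have hG : ∀ x, G x = (if x 0 = 0 then (1/2 : ℂ) else
      (1/2) * Complex.exp (-I * ψ) * (if x 1 = 0 then Complex.exp (I * θ) else Complex.exp (-I * θ))) := by
    intro x
    show (∑ y, ctrlU (0:Fin 2) 1 ψ θ x y * prodPhi 2 y) = _
    rw [sum4]
    rcases fin2cases (x 0) with hx0 | hx0 <;>
      rcases fin2cases (x 1) with hx1 | hx1 <;>
      simp [ctrlU, twoSite, P0, P1, Ubar, prodPhi, he01, hx0, hx1, Matrix.one_apply, hs] <;> ring
  have hpψ : Real.cos ψ ^ 2 + Real.sin ψ ^ 2 = 1 := Real.cos_sq_add_sin_sq ψ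
  have hpθ : Real.cos θ ^ 2 + Real.sin θ ^ 2 = 1 := Real.cos_sq_add_sin_sq θ
  have hx0 : (expec G (onSite 0 σx)).re = Real.cos ψ * Real.cos θ := by
    rw [expec, sum4]; simp only [sum4]
    simp [onSite, σx, hG, he0, he1, Matrix.one_apply, Complex.exp_re, Complex.exp_im]
    ring
  have hy0 : (expec G (onSite 0 σy)).re = -(Real.sin ψ * Real.cos θ) := by
    rw [expec, sum4]; simp only [sum4]
    simp [onSite, σy, hG, he0, he1, Matrix.one_apply, Complex.exp_re, Complex.exp_im]
    ring
  have hz0 : (expec G (onSite 0 σz)).re = 0 := by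
    rw [expec, sum4]; simp only [sum4]
    simp [onSite, σz, hG, he0, he1, Matrix.one_apply, Complex.exp_re, Complex.exp_im]
    linear_combination (-(1/2) * (Real.cos θ ^ 2 + Real.sin θ ^ 2)) * hpψ - (1/2) * hpθ
  have hx1 : (expec G (onSite 1 σx)).re = Real.cos θ ^ 2 := by
    rw [expec, sum4]; simp only [sum4]
    simp [onSite, σx, hG, he0, he1, Matrix.one_apply, Complex.exp_re, Complex.exp_im]
    linear_combination ((Real.cos θ ^ 2 - Real.sin θ ^ 2)/2) * hpψ - (1/2) * hpθ
  have hy1 : (expec G (onSite 1 σy)).re = -(Real.sin θ * Real.cos θ) := by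
    rw [expec, sum4]; simp only [sum4]
    simp [onSite, σy, hG, he0, he1, Matrix.one_apply, Complex.exp_re, Complex.exp_im]
    linear_combination (-(Real.sin θ * Real.cos θ)) * hpψ
  have hz1 : (expec G (onSite 1 σz)).re = 0 := by
    rw [expec, sum4]; simp only [sum4]
    simp [onSite, σz, hG, he0, he1, Matrix.one_apply, Complex.exp_re, Complex.exp_im]
    ring
  have key : ED G = 1 - Real.cos θ ^ 2 := by
    rw [ED, Fin.sum_univ_two, pauliNormSq, pauliNormSq, hx0, hy0, hz0, hx1, hy1, hz1]
    push_cast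
    linear_combination (-(Real.cos θ ^ 2 / 2)) * hpψ + (-(Real.cos θ ^ 2 / 2)) * hpθ
  exact ⟨key, by rw [key]; linear_combination -hpθ⟩
end
end

section
/- Let |φ⟩ = (|0⟩+|1⟩)/√2 ∈ ℂ², and for n ≥ 1 qubits indexed 1,…,n plus a distinguished qubit i, let U_tot = ∏_{k=1}^{n} U_{i,j_k} be the product of controlled-Ū operators with common control qubit i and distinct targets j_1,…,j_n, where Ū = e^{-iψ} diag(e^{iθ}, e^{-iθ}). Then ⟨φ|^{⊗(n+1)} U_tot† σ^{(i)} U_tot |φ⟩^{⊗(n+1)} = cosⁿθ (cos(nψ), -sin(nψ), 0), and hence the contribution of qubit i to the entanglement distance is E^{(i)} = 1 - cos^{2n}θ. -/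
open Complex Matrix BigOperators Finset

noncomputable section

/-! ### Auxiliary lemmas -/

def uu (ψ θ : ℝ) : Fin 2 → ℂ := fun s => if s = 0 then
  Complex.exp (-I * ψ) * Complex.exp (I * θ) else Complex.exp (-I * ψ) * Complex.exp (-I * θ)

lemma P0_eq : P0 = Matrix.diagonal ![1, 0] := by
  ext i j; fin_cases i <;> fin_cases j <;> simp [P0, Matrix.diagonal]

lemma P1_eq : P1 = Matrix.diagonal ![0, 1] := by
  ext i j; fin_cases i <;> fin_cases j <;> simp [P1, Matrix.diagonal]

lemma Ubar_eq (ψ θ : ℝ) : Ubar ψ θ = Matrix.diagonal (uu ψ θ) := by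
  ext i j; fin_cases i <;> fin_cases j <;> simp [Ubar, uu, Matrix.diagonal]

lemma twoSite_diag {M : ℕ} (a b : Fin M) (hab : a ≠ b) (f g : Fin 2 → ℂ) :
    twoSite a b (Matrix.diagonal f) (Matrix.diagonal g) =
      Matrix.diagonal (fun x => f (x a) * g (x b)) := by
  ext x y
  by_cases h : x = y
  · subst h
    simp [twoSite, Matrix.diagonal_apply_eq, Finset.prod_ite_eq]
  · rw [Matrix.diagonal_apply_ne _ h]
    obtain ⟨j, hj⟩ := Function.ne_iff.mp h
    by_cases hja : j = a
    · subst hja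
      simp [twoSite, Matrix.diagonal_apply_ne _ hj]
    by_cases hjb : j = b
    · subst hjb
      simp [twoSite, Matrix.diagonal_apply_ne _ hj]
    · have hmem : j ∈ (Finset.univ.erase a).erase b := by
        simp [hja, hjb]
      simp only [twoSite, Matrix.of_apply]
      rw [Finset.prod_eq_zero hmem (by simp [hj])]
      ring

lemma ctrlU_diag {M : ℕ} (a b : Fin M) (hab : a ≠ b) (ψ θ : ℝ) :
    ctrlU a b ψ θ =
      Matrix.diagonal (fun x => if x a = 0 then 1 else uu ψ θ (x b)) := by
  rw [ctrlU, P0_eq, P1_eq, Ubar_eq, ← Matrix.diagonal_one,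
    twoSite_diag a b hab, twoSite_diag a b hab, Matrix.diagonal_add]
  ext x y
  by_cases hxy : x = y
  · subst hxy
    simp only [Matrix.diagonal_apply_eq]
    by_cases h : x a = 0
    · simp [h]
    · have h1 : x a = 1 := by omega
      simp [h1]
  · simp [Matrix.diagonal_apply_ne _ hxy]

lemma list_prod_diag {X : Type*} [Fintype X] [DecidableEq X] :
    ∀ (n : ℕ) (d : Fin n → X → ℂ),
      (List.ofFn fun k => Matrix.diagonal (d k)).prod =
        Matrix.diagonal (fun x => ∏ k, d k x) := by
  intro n
  induction n with
  | zero => intro d; simp [Matrix.diagonal_one]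
  | succ m ih =>
      intro d
      rw [List.ofFn_succ, List.prod_cons, ih, Matrix.diagonal_mul_diagonal]
      ext x y
      by_cases hxy : x = y
      · subst hxy
        simp only [Matrix.diagonal_apply_eq]
        rw [Fin.prod_univ_succ]
      · simp [Matrix.diagonal_apply_ne _ hxy]

lemma sum_cons_reindex {n : ℕ} {β : Type*} [AddCommMonoid β]
    (f : (Fin (n + 1) → Fin 2) → β) :
    ∑ x, f x = ∑ a : Fin 2, ∑ r : Fin n → Fin 2, f (Fin.cons a r) := by
  rw [← Equiv.sum_comp (Fin.consEquiv (fun _ => Fin 2)) f, Fintype.sum_prod_type]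
  rfl

lemma sum_prod_pow {n : ℕ} (g : Fin 2 → ℂ) :
    ∑ r : Fin n → Fin 2, ∏ k, g (r k) = (g 0 + g 1) ^ n := by
  induction n with
  | zero => simp
  | succ m ih =>
      rw [sum_cons_reindex (fun r => ∏ k, g (r k))]
      have : ∀ (a : Fin 2) (r : Fin m → Fin 2),
          ∏ k, g ((Fin.cons a r : Fin (m+1) → Fin 2) k) = g a * ∏ k, g (r k) := by
        intro a r
        rw [Fin.prod_univ_succ]
        simp
      simp_rw [this]
      rw [← Finset.sum_mul_sum, ih]
      rw [Fin.sum_univ_two]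
      ring

lemma delta_prod {n : ℕ} (a b : Fin 2) (r s : Fin n → Fin 2) :
    (∏ j ∈ Finset.univ.erase (0 : Fin (n+1)),
      (if (Fin.cons a r : Fin (n+1) → Fin 2) j = (Fin.cons b s : Fin (n+1) → Fin 2) j
        then (1:ℂ) else 0)) =
      if r = s then 1 else 0 := by
  rw [Finset.prod_boole]
  congr 1
  simp only [eq_iff_iff]
  constructor
  · intro h
    funext i
    have := h i.succ (by simp [Fin.succ_ne_zero])
    simpa using this
  · intro h j hj
    have hj0 : j ≠ 0 := by simpa using (Finset.mem_erase.mp hj).1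
    obtain ⟨i, rfl⟩ := Fin.exists_succ_eq.mpr hj0
    simp [h]

def DD (ψ θ : ℝ) {n : ℕ} (a : Fin 2) (r : Fin n → Fin 2) : ℂ :=
  if a = 0 then 1 else ∏ k, uu ψ θ (r k)

lemma expec_onSite_eq (n : ℕ) (ψ θ : ℝ) (A : Matrix (Fin 2) (Fin 2) ℂ) :
    expec ((List.ofFn fun k : Fin n => ctrlU (0 : Fin (n + 1)) k.succ ψ θ).prod.mulVec
        (prodPhi (n + 1))) (onSite 0 A) =
      ((1:ℂ)/2) ^ (n+1) * ∑ a : Fin 2, ∑ b : Fin 2, A a b *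
        ∑ r : Fin n → Fin 2, (starRingEnd ℂ) (DD ψ θ a r) * DD ψ θ b r := by
  have hU : (List.ofFn fun k : Fin n => ctrlU (0 : Fin (n + 1)) k.succ ψ θ).prod =
      Matrix.diagonal (fun x => ∏ k : Fin n, (if x 0 = 0 then 1 else uu ψ θ (x k.succ))) := by
    have h1 : (fun k : Fin n => ctrlU (0 : Fin (n + 1)) k.succ ψ θ) =
        fun k => Matrix.diagonal (fun x => if x 0 = 0 then 1 else uu ψ θ (x k.succ)) := by
      funext k
      exact ctrlU_diag 0 k.succ (Fin.succ_ne_zero k).symm ψ θ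
    rw [h1, list_prod_diag]
  set c : ℂ := (1 / (Real.sqrt 2 : ℂ)) ^ (n+1) with hc
  have hG : ∀ (a : Fin 2) (r : Fin n → Fin 2),
      ((List.ofFn fun k : Fin n => ctrlU (0 : Fin (n + 1)) k.succ ψ θ).prod.mulVec
        (prodPhi (n + 1))) (Fin.cons a r) = c * DD ψ θ a r := by
    intro a r
    rw [hU, Matrix.mulVec_diagonal]
    simp only [prodPhi, DD, Fin.cons_zero, Fin.cons_succ]
    by_cases h : a = 0
    · simp only [h, if_pos rfl, if_true, mul_one]
      rw [hc]
      simp [one_div, inv_pow]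
    · simp only [h, if_false, if_neg h]
      rw [hc]
      simp only [one_div, inv_pow]
      ring
  unfold expec
  rw [sum_cons_reindex]
  have inner : ∀ a r, (∑ y, (starRingEnd ℂ)
        (((List.ofFn fun k : Fin n => ctrlU (0 : Fin (n + 1)) k.succ ψ θ).prod.mulVec
          (prodPhi (n + 1))) (Fin.cons a r)) *
        onSite 0 A (Fin.cons a r) y *
        ((List.ofFn fun k : Fin n => ctrlU (0 : Fin (n + 1)) k.succ ψ θ).prod.mulVec
          (prodPhi (n + 1))) y) =
      ∑ b : Fin 2, (starRingEnd ℂ) (c * DD ψ θ a r) * (A a b) * (c * DD ψ θ b r) := by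
    intro a r
    rw [sum_cons_reindex]
    refine Finset.sum_congr rfl fun b _ => ?_
    rw [Finset.sum_eq_single r]
    · rw [hG, hG]
      simp only [onSite, Matrix.of_apply, Fin.cons_zero, delta_prod, if_pos rfl, if_true]
      ring
    · intro s _ hs
      rw [hG]
      simp only [onSite, Matrix.of_apply, Fin.cons_zero, delta_prod, if_neg (Ne.symm hs)]
      ring
    · intro h
      exact absurd (Finset.mem_univ r) h
  simp_rw [inner]
  have hcc : (starRingEnd ℂ) c * c = ((1:ℂ)/2)^(n+1) := by
    have h2 : ((Real.sqrt 2 : ℝ) : ℂ) * ((Real.sqrt 2 : ℝ) : ℂ) = 2 := by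
      rw [← Complex.ofReal_mul, Real.mul_self_sqrt (by norm_num)]
      norm_num
    rw [hc, map_pow, map_div₀, _root_.map_one, Complex.conj_ofReal, ← mul_pow,
      div_mul_div_comm, one_mul, h2]
  rw [Finset.mul_sum]
  refine Finset.sum_congr rfl fun a _ => ?_
  rw [Finset.sum_comm, Finset.mul_sum]
  refine Finset.sum_congr rfl fun b _ => ?_
  rw [Finset.mul_sum, Finset.mul_sum]
  refine Finset.sum_congr rfl fun r _ => ?_
  simp only [_root_.map_mul]
  rw [← hcc]
  ring

lemma exp_real_mul_I (y : ℝ) :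
    Complex.exp ((y:ℂ) * I) = (Real.cos y : ℂ) + (Real.sin y : ℂ) * I := by
  rw [Complex.exp_mul_I, Complex.ofReal_cos, Complex.ofReal_sin]

lemma uu_sum (ψ θ : ℝ) :
    uu ψ θ 0 + uu ψ θ 1 = 2 * (Real.cos θ : ℂ) * Complex.exp (-(ψ:ℂ) * I) := by
  simp only [uu, if_pos rfl, if_true, if_neg (one_ne_zero)]
  have h1 : Complex.exp (I * θ) + Complex.exp (-I * θ) = 2 * (Real.cos θ : ℂ) := by
    rw [Complex.ofReal_cos, Complex.cos]
    ring_nf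
  have h2 : Complex.exp (-I * ψ) = Complex.exp (-(ψ:ℂ) * I) := by ring_nf
  rw [← mul_add, h1, h2]
  ring

lemma uu_conj_mul (ψ θ : ℝ) (s : Fin 2) :
    (starRingEnd ℂ) (uu ψ θ s) * uu ψ θ s = 1 := by
  have hs : s = 0 ∨ s = 1 := by omega
  rcases hs with rfl | rfl <;>
  · simp only [uu, if_pos rfl, if_true, if_neg one_ne_zero, ← Complex.exp_add]
    rw [← Complex.exp_conj, ← Complex.exp_add]
    simp only [map_add, map_neg, _root_.map_mul, Complex.conj_I, Complex.conj_ofReal]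
    ring_nf
    simp

lemma qsum00 (ψ θ : ℝ) (n : ℕ) :
    ∑ r : Fin n → Fin 2, (starRingEnd ℂ) (DD ψ θ 0 r) * DD ψ θ 0 r = (2:ℂ)^n := by
  simp [DD, Finset.card_univ]

lemma qsum11 (ψ θ : ℝ) (n : ℕ) :
    ∑ r : Fin n → Fin 2, (starRingEnd ℂ) (DD ψ θ 1 r) * DD ψ θ 1 r = (2:ℂ)^n := by
  have h : ∀ r : Fin n → Fin 2, (starRingEnd ℂ) (DD ψ θ 1 r) * DD ψ θ 1 r = 1 := by
    intro r
    simp only [DD, if_neg one_ne_zero, map_prod, ← Finset.prod_mul_distrib]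
    rw [Finset.prod_congr rfl fun k _ => uu_conj_mul ψ θ (r k)]
    simp
  simp [h, Finset.card_univ]

lemma qsum01 (ψ θ : ℝ) (n : ℕ) :
    ∑ r : Fin n → Fin 2, (starRingEnd ℂ) (DD ψ θ 0 r) * DD ψ θ 1 r =
      (2:ℂ)^n * (Real.cos θ : ℂ)^n *
        ((Real.cos (n * ψ) : ℂ) - (Real.sin (n * ψ) : ℂ) * I) := by
  simp only [DD, if_pos rfl, if_true, if_neg one_ne_zero, _root_.map_one, one_mul]
  rw [sum_prod_pow, uu_sum, mul_pow, mul_pow, ← Complex.exp_nat_mul]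
  have h : ((n:ℂ)) * (-(ψ:ℂ) * I) = ((-(n * ψ) : ℝ) : ℂ) * I := by push_cast; ring
  rw [h, exp_real_mul_I, Real.cos_neg, Real.sin_neg]
  push_cast
  ring

lemma qsum10 (ψ θ : ℝ) (n : ℕ) :
    ∑ r : Fin n → Fin 2, (starRingEnd ℂ) (DD ψ θ 1 r) * DD ψ θ 0 r =
      (2:ℂ)^n * (Real.cos θ : ℂ)^n *
        ((Real.cos (n * ψ) : ℂ) + (Real.sin (n * ψ) : ℂ) * I) := by
  simp only [DD, if_pos rfl, if_true, if_neg one_ne_zero, mul_one, map_prod]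
  rw [sum_prod_pow (fun s => (starRingEnd ℂ) (uu ψ θ s)), ← _root_.map_add, uu_sum]
  rw [_root_.map_mul, _root_.map_mul, ← Complex.exp_conj]
  simp only [map_neg, _root_.map_mul, Complex.conj_I, Complex.conj_ofReal, _root_.map_ofNat]
  rw [mul_pow, mul_pow, ← Complex.exp_nat_mul]
  have h : ((n:ℂ)) * (-(ψ:ℂ) * -I) = (((n * ψ) : ℝ) : ℂ) * I := by push_cast; ring
  rw [h, exp_real_mul_I]


theorem stmt13 (n : ℕ) (hn : 1 ≤ n) (ψ θ : ℝ) :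
    let Utot := (List.ofFn fun k : Fin n => ctrlU (0 : Fin (n + 1)) k.succ ψ θ).prod
    let G := Utot.mulVec (prodPhi (n + 1))
    (expec G (onSite (0 : Fin (n + 1)) σx)).re = Real.cos θ ^ n * Real.cos (n * ψ) ∧
    (expec G (onSite (0 : Fin (n + 1)) σy)).re = -(Real.cos θ ^ n * Real.sin (n * ψ)) ∧
    (expec G (onSite (0 : Fin (n + 1)) σz)).re = 0 ∧
    1 - pauliNormSq G 0 = 1 - Real.cos θ ^ (2 * n) := by
  intro Utot G
  have hkey : ((1:ℂ)/2)^(n+1) * (2:ℂ)^n * 2 = 1 := by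
    have h1 : ((1:ℂ)/2)^(n+1) * (2:ℂ)^(n+1) = 1 := by
      rw [← mul_pow]; norm_num
    calc ((1:ℂ)/2)^(n+1) * (2:ℂ)^n * 2 = ((1:ℂ)/2)^(n+1) * (2:ℂ)^(n+1) := by
          rw [pow_succ]; ring
      _ = 1 := h1
  have hGdef : G = (List.ofFn fun k : Fin n => ctrlU (0 : Fin (n + 1)) k.succ ψ θ).prod.mulVec
      (prodPhi (n + 1)) := rfl
  have hx : expec G (onSite 0 σx) = ((Real.cos θ ^ n * Real.cos (n * ψ) : ℝ) : ℂ) := by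
    rw [hGdef, expec_onSite_eq]
    simp only [Fin.sum_univ_two]
    rw [qsum00, qsum01, qsum10, qsum11]
    norm_num [σx, Matrix.cons_val_zero, Matrix.cons_val_one, Matrix.head_cons]
    push_cast
    simp only [← Complex.ofReal_natCast, ← Complex.ofReal_mul, ← Complex.ofReal_cos,
      ← Complex.ofReal_sin]
    linear_combination ((Real.cos θ : ℂ)^n * (Real.cos (↑n * ψ) : ℂ)) * hkey
  have hy : expec G (onSite 0 σy) = ((-(Real.cos θ ^ n * Real.sin (n * ψ)) : ℝ) : ℂ) := by
    rw [hGdef, expec_onSite_eq]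
    simp only [Fin.sum_univ_two]
    rw [qsum00, qsum01, qsum10, qsum11]
    norm_num [σy, Matrix.cons_val_zero, Matrix.cons_val_one, Matrix.head_cons]
    push_cast
    simp only [← Complex.ofReal_natCast, ← Complex.ofReal_mul, ← Complex.ofReal_cos,
      ← Complex.ofReal_sin]
    linear_combination ((Real.cos θ : ℂ)^n * (Real.sin (↑n * ψ) : ℂ) * (I * I)) * hkey +
      ((Real.cos θ : ℂ)^n * (Real.sin (↑n * ψ) : ℂ)) * Complex.I_mul_I
  have hz : expec G (onSite 0 σz) = 0 := by
    rw [hGdef, expec_onSite_eq]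
    simp only [Fin.sum_univ_two]
    rw [qsum00, qsum01, qsum10, qsum11]
    norm_num [σz, Matrix.cons_val_zero, Matrix.cons_val_one, Matrix.head_cons]
  have e1 : (expec G (onSite 0 σx)).re = Real.cos θ ^ n * Real.cos (n * ψ) := by
    rw [hx]; exact Complex.ofReal_re _
  have e2 : (expec G (onSite 0 σy)).re = -(Real.cos θ ^ n * Real.sin (n * ψ)) := by
    rw [hy]; exact Complex.ofReal_re _
  have e3 : (expec G (onSite 0 σz)).re = 0 := by rw [hz]; rfl
  refine ⟨e1, e2, e3, ?_⟩
  unfold pauliNormSq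
  rw [e1, e2, e3]
  have h := Real.sin_sq_add_cos_sq (↑n * ψ)
  linear_combination (-(Real.cos θ ^ (2*n))) * h
end
end
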